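/- Stability of truncated scores under L² perturbation (Lemma 2). Let T be a random variable with values in [0,1] whose cumulative distribution function is continuous, and let (T̂_n) be random variables on the same probability space with values in [0,1] satisfying E[(T̂_n − T)²] → 0 as n → ∞. Fix constants α ∈ (0,1) and t ∈ (0,1), and set V := (T − α)·1(T < t) and V̂_n := (T̂_n − α)·1(T̂_n < t). Then E[(V̂_n − V)²] → 0 as n → ∞. -/

import Mathlib

open MeasureTheory Filter

set_option maxHeartbeats 1000000

/-- **Stability of truncated scores under L² perturbation** (Lemma 2).
If `T ∈ [0,1]` has a continuous CDF, `T̂_n ∈ [0,1]` satisfy `E[(T̂_n − T)²] → 0`, and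
`V := (T − α)·1(T < t)`, `V̂_n := (T̂_n − α)·1(T̂_n < t)`, then `E[(V̂_n − V)²] → 0`. -/
theorem truncated_score_stability {Ω : Type*} [MeasurableSpace Ω]
    (P : Measure Ω) [IsProbabilityMeasure P]
    (T : Ω → ℝ) (hT : Measurable T) (hTrange : ∀ ω, T ω ∈ Set.Icc (0 : ℝ) 1)
    (hcdf : Continuous fun t : ℝ => (P {ω | T ω ≤ t}).toReal)
    (That : ℕ → Ω → ℝ) (hThat : ∀ n, Measurable (That n))
    (hThatrange : ∀ n ω, That n ω ∈ Set.Icc (0 : ℝ) 1)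
    (hL2 : Tendsto (fun n => ∫ ω, (That n ω - T ω) ^ 2 ∂P) atTop (nhds 0))
    (α t : ℝ) (hα : α ∈ Set.Ioo (0 : ℝ) 1) (ht : t ∈ Set.Ioo (0 : ℝ) 1) :
    Tendsto
      (fun n => ∫ ω,
        ((if That n ω < t then That n ω - α else 0) - (if T ω < t then T ω - α else 0)) ^ 2 ∂P)
      atTop (nhds 0) := by
  set F : ℝ → ℝ := fun s => (P {ω | T ω ≤ s}).toReal with hF
  -- measurability of basic sets
  have hmeas_le : ∀ s : ℝ, MeasurableSet {ω | T ω ≤ s} := fun s =>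
    hT measurableSet_Iic
  -- the perturbation integrand and the target integrand, with integrability
  have hg_meas : ∀ n, Measurable (fun ω =>
      ((if That n ω < t then That n ω - α else 0) - (if T ω < t then T ω - α else 0)) ^ 2) := by
    intro n
    apply Measurable.pow_const
    apply Measurable.sub
    · exact Measurable.ite (measurableSet_lt (hThat n) measurable_const)
        ((hThat n).sub measurable_const) measurable_const
    · exact Measurable.ite (measurableSet_lt hT measurable_const)
        (hT.sub measurable_const) measurable_const
  have hf_meas : ∀ n, Measurable (fun ω => (That n ω - T ω) ^ 2) := fun n =>
    (((hThat n).sub hT).pow_const 2)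
  have hg_int : ∀ n, Integrable (fun ω =>
      ((if That n ω < t then That n ω - α else 0) - (if T ω < t then T ω - α else 0)) ^ 2) P := by
    intro n
    refine (integrable_const (4 : ℝ)).mono' (hg_meas n).aestronglyMeasurable
      (ae_of_all _ fun ω => ?_)
    have h1 := hThatrange n ω
    have h2 := hTrange ω
    rw [Real.norm_eq_abs, abs_of_nonneg (sq_nonneg _)]
    split_ifs with hb1 hb2 hb2 <;>
      nlinarith [hα.1, hα.2, h1.1, h1.2, h2.1, h2.2]
  have hf_int : ∀ n, Integrable (fun ω => (That n ω - T ω) ^ 2) P := by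
    intro n
    refine (integrable_const (1 : ℝ)).mono' (hf_meas n).aestronglyMeasurable
      (ae_of_all _ fun ω => ?_)
    have h1 := hThatrange n ω
    have h2 := hTrange ω
    rw [Real.norm_eq_abs, abs_of_nonneg (sq_nonneg _)]
    nlinarith [h1.1, h1.2, h2.1, h2.2]
  -- main ε-argument
  rw [Metric.tendsto_atTop]
  intro ε hε
  -- choose δ from continuity of the CDF at t
  have hcont : ContinuousAt F t := hcdf.continuousAt
  rw [Metric.continuousAt_iff] at hcont
  obtain ⟨γ, hγ, hγ'⟩ := hcont (ε / 16) (by linarith)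
  set δ : ℝ := γ / 3 with hδdef
  have hδ : 0 < δ := by positivity
  -- the bad set
  set A : Set Ω := {ω | |T ω - t| ≤ δ} with hA
  have hAmeas : MeasurableSet A := by
    have : A = (fun ω => |T ω - t|) ⁻¹' Set.Iic δ := rfl
    rw [this]
    exact ((hT.sub measurable_const).abs) measurableSet_Iic
  -- bound P(A) using the CDF
  have hPA : (P A).toReal ≤ F (t + δ) - F (t - 2 * δ) := by
    have hsub : {ω | T ω ≤ t - 2 * δ} ∪ A ⊆ {ω | T ω ≤ t + δ} := by
      intro ω hω
      rcases hω with hω | hω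
      · simp only [Set.mem_setOf_eq] at hω ⊢; linarith
      · simp only [hA, Set.mem_setOf_eq, abs_le] at hω ⊢; linarith [hω.2]
    have hdisj : Disjoint {ω | T ω ≤ t - 2 * δ} A := by
      rw [Set.disjoint_left]
      intro ω hω hω'
      simp only [Set.mem_setOf_eq] at hω
      simp only [hA, Set.mem_setOf_eq, abs_le] at hω'
      linarith [hω'.1]
    have h1 : P {ω | T ω ≤ t - 2 * δ} + P A ≤ P {ω | T ω ≤ t + δ} := by
      rw [← measure_union hdisj hAmeas]
      exact measure_mono hsub
    have hne1 : P {ω | T ω ≤ t - 2 * δ} ≠ ⊤ := measure_ne_top _ _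
    have hne2 : P A ≠ ⊤ := measure_ne_top _ _
    have := ENNReal.toReal_mono (measure_ne_top P _) h1
    rw [ENNReal.toReal_add hne1 hne2] at this
    simp only [hF]
    linarith
  have hPAε : 4 * (P A).toReal < ε / 2 := by
    have h1 : |F (t + δ) - F t| < ε / 16 := by
      apply hγ'
      rw [Real.dist_eq]
      simp only [add_sub_cancel_left]
      rw [abs_of_pos hδ]; linarith
    have h2 : |F (t - 2 * δ) - F t| < ε / 16 := by
      apply hγ'
      rw [Real.dist_eq]
      have : t - 2 * δ - t = -(2 * δ) := by ring
      rw [this, abs_neg, abs_of_pos (by linarith)]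
      linarith
    rw [abs_lt] at h1 h2
    nlinarith [hPA]
  -- constant
  set c : ℝ := 1 + 4 / δ ^ 2 with hc
  have hcpos : 0 < c := by positivity
  -- eventually the L² error is small
  have hL2' : ∀ᶠ n in atTop, (∫ ω, (That n ω - T ω) ^ 2 ∂P) < ε / 2 / c := by
    have := Metric.tendsto_atTop.mp hL2 (ε / 2 / c) (by positivity)
    obtain ⟨N, hN⟩ := this
    refine eventually_atTop.mpr ⟨N, fun n hn => ?_⟩
    have := hN n hn
    rw [Real.dist_eq, sub_zero] at this
    exact lt_of_abs_lt this
  rw [← eventually_atTop]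
  filter_upwards [hL2'] with n hn
  rw [Real.dist_eq, sub_zero]
  -- pointwise bound
  have hpt : ∀ ω, ((if That n ω < t then That n ω - α else 0) -
      (if T ω < t then T ω - α else 0)) ^ 2 ≤
      c * (That n ω - T ω) ^ 2 + A.indicator (fun _ => (4 : ℝ)) ω := by
    intro ω
    have h1 := hThatrange n ω
    have h2 := hTrange ω
    have hdivpos : 0 < 4 / δ ^ 2 := by positivity
    have hsqnn : (0:ℝ) ≤ (That n ω - T ω) ^ 2 := sq_nonneg _
    by_cases hb1 : That n ω < t <;> by_cases hb2 : T ω < t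
    · simp only [if_pos hb1, if_pos hb2]
      have : That n ω - α - (T ω - α) = That n ω - T ω := by ring
      rw [this]
      have hind : (0:ℝ) ≤ A.indicator (fun _ => (4 : ℝ)) ω :=
        Set.indicator_nonneg (fun _ _ => by norm_num) ω
      rw [hc]
      nlinarith
    · -- indicators disagree: That < t, T ≥ t
      simp only [if_pos hb1, if_neg hb2]
      push_neg at hb2
      have hsq1 : (That n ω - α - 0) ^ 2 ≤ 1 := by nlinarith [hα.1, hα.2, h1.1, h1.2]
      by_cases hω : ω ∈ A
      · rw [Set.indicator_of_mem hω]
        rw [hc]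
        nlinarith
      · rw [Set.indicator_of_notMem hω]
        simp only [hA, Set.mem_setOf_eq, not_le] at hω
        have habs : T ω - t > δ := by
          rwa [abs_of_nonneg (by linarith)] at hω
        have hdist : T ω - That n ω > δ := by linarith
        have hsqδ : δ ^ 2 < (That n ω - T ω) ^ 2 := by nlinarith
        have h4 : 4 < 4 / δ ^ 2 * (That n ω - T ω) ^ 2 := by
          rw [div_mul_eq_mul_div, lt_div_iff₀ (by positivity)]
          nlinarith
        rw [hc]
        nlinarith
    · -- indicators disagree: That ≥ t, T < t
      simp only [if_neg hb1, if_pos hb2]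
      push_neg at hb1
      have hsq1 : (0 - (T ω - α)) ^ 2 ≤ 1 := by nlinarith [hα.1, hα.2, h2.1, h2.2]
      by_cases hω : ω ∈ A
      · rw [Set.indicator_of_mem hω]
        rw [hc]
        nlinarith
      · rw [Set.indicator_of_notMem hω]
        simp only [hA, Set.mem_setOf_eq, not_le] at hω
        have habs : t - T ω > δ := by
          rw [abs_of_neg (by linarith)] at hω; linarith
        have hdist : That n ω - T ω > δ := by linarith
        have hsqδ : δ ^ 2 < (That n ω - T ω) ^ 2 := by nlinarith
        have h4 : 4 < 4 / δ ^ 2 * (That n ω - T ω) ^ 2 := by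
          rw [div_mul_eq_mul_div, lt_div_iff₀ (by positivity)]
          nlinarith
        rw [hc]
        nlinarith
    · simp only [if_neg hb1, if_neg hb2]
      have hind : (0:ℝ) ≤ A.indicator (fun _ => (4 : ℝ)) ω :=
        Set.indicator_nonneg (fun _ _ => by norm_num) ω
      simp only [sub_zero, zero_pow]
      nlinarith
  -- integrate the pointwise bound
  have hrhs_int : Integrable (fun ω =>
      c * (That n ω - T ω) ^ 2 + A.indicator (fun _ => (4 : ℝ)) ω) P := by
    exact ((hf_int n).const_mul c).add
      ((integrable_const (4:ℝ)).indicator hAmeas)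
  have hmono : (∫ ω, ((if That n ω < t then That n ω - α else 0) -
      (if T ω < t then T ω - α else 0)) ^ 2 ∂P) ≤
      ∫ ω, (c * (That n ω - T ω) ^ 2 + A.indicator (fun _ => (4 : ℝ)) ω) ∂P :=
    integral_mono (hg_int n) hrhs_int hpt
  have hsplit : (∫ ω, (c * (That n ω - T ω) ^ 2 + A.indicator (fun _ => (4 : ℝ)) ω) ∂P)
      = c * (∫ ω, (That n ω - T ω) ^ 2 ∂P) + 4 * (P A).toReal := by
    rw [integral_add ((hf_int n).const_mul c) ((integrable_const (4:ℝ)).indicator hAmeas),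
      integral_const_mul, integral_indicator_const _ hAmeas]
    rw [smul_eq_mul, measureReal_def]
    ring
  have hnn : (0:ℝ) ≤ ∫ ω, ((if That n ω < t then That n ω - α else 0) -
      (if T ω < t then T ω - α else 0)) ^ 2 ∂P :=
    integral_nonneg (fun ω => sq_nonneg _)
  rw [abs_of_nonneg hnn]
  have hfin : c * (∫ ω, (That n ω - T ω) ^ 2 ∂P) < ε / 2 := by
    calc c * (∫ ω, (That n ω - T ω) ^ 2 ∂P) < c * (ε / 2 / c) :=
          mul_lt_mul_of_pos_left hn hcpos
      _ = ε / 2 := by field_simp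
  rw [hsplit] at hmono
  refine hmono.trans_lt ?_
  have h2 := add_lt_add hfin hPAε
  have h3 : ε / 2 + ε / 2 = ε := by ring
  exact h3 ▸ h2
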